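/- Let G be connected with a closed labeling, and let E_1,...,E_r be the exchangeability equivalence classes with r > 1. Then the number of closed labelings of G is exactly 2·∏_{a=1}^{r} |E_a|!. -/

import Mathlib

def ClosedLabelingOf {V : Type*} {n : ℕ} (G : SimpleGraph V) (ℓ : V ≃ Fin n) : Prop :=
  ∀ u v w : V, G.Adj v u → G.Adj v w → u ≠ w →
    ((ℓ v < ℓ u ∧ ℓ v < ℓ w) ∨ (ℓ u < ℓ v ∧ ℓ w < ℓ v)) → G.Adj u w

def fullNbhd {V : Type*} (G : SimpleGraph V) (v : V) : Set V :=
  {v} ∪ G.neighborSet v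

def exchClasses {n : ℕ} (G : SimpleGraph (Fin n)) : Set (Set (Fin n)) :=
  {S | ∃ v : Fin n, S = {w : Fin n | fullNbhd G w = fullNbhd G v}}

namespace CLaux

variable {n : ℕ} (G : SimpleGraph (Fin n))

def UF (τ : Fin n ≃ Fin n) : Prop :=
  ∀ u v w : Fin n, G.Adj u w → τ u < τ v → τ v < τ w → G.Adj u v ∧ G.Adj v w

def UFI : Prop :=
  ∀ u v w : Fin n, G.Adj u w → u < v → v < w → G.Adj u v ∧ G.Adj v w

def Spn : Prop := ∀ i : Fin n, ∀ h : (i : ℕ) + 1 < n, G.Adj i ⟨(i : ℕ) + 1, h⟩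

def Twin (u v : Fin n) : Prop := fullNbhd G u = fullNbhd G v

variable {G}

lemma mem_fullNbhd {x v : Fin n} : x ∈ fullNbhd G v ↔ x = v ∨ G.Adj v x := by
  simp [fullNbhd, SimpleGraph.neighborSet]

lemma self_mem_fullNbhd (v : Fin n) : v ∈ fullNbhd G v := by simp [mem_fullNbhd]

lemma closed_apply (hG : ClosedLabelingOf G (Equiv.refl (Fin n))) {u v w : Fin n}
    (h1 : G.Adj v u) (h2 : G.Adj v w) (hne : u ≠ w)
    (h4 : (v < u ∧ v < w) ∨ (u < v ∧ w < v)) : G.Adj u w :=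
  hG u v w h1 h2 hne (by simpa using h4)

lemma spnAux (hG : ClosedLabelingOf G (Equiv.refl (Fin n))) (a b : Fin n)
    (hab : (a : ℕ) + 1 = (b : ℕ)) :
    ∀ m : ℕ, ∀ p : ℕ → Fin n, (∀ t, t < m → G.Adj (p t) (p (t + 1))) →
      p 0 = a → p m = b → G.Adj a b := by
  intro m
  induction m using Nat.strong_induction_on with
  | _ m IH =>
    intro p hadj h0 hm
    by_cases hm0 : m = 0
    · exfalso
      rw [hm0, h0] at hm
      have := congrArg Fin.val hm
      omega
    by_cases hm1 : m = 1
    · have := hadj 0 (by omega)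
      rw [h0] at this
      rw [hm1] at hm
      rwa [hm] at this
    have hm2 : 2 ≤ m := by omega
    have key : G.Adj a b ∨ ∃ t, 1 ≤ t ∧ t + 1 ≤ m ∧
        (G.Adj (p (t - 1)) (p (t + 1)) ∨ p (t - 1) = p (t + 1)) := by
      obtain ⟨t₀, ht₀, hmax⟩ := Finset.exists_max_image (Finset.range (m + 1))
        (fun t => ((p t : Fin n) : ℕ)) ⟨0, by simp⟩
      simp only [Finset.mem_range] at ht₀ hmax
      by_cases hbig : (b : ℕ) < (p t₀ : ℕ)
      · have ht0 : t₀ ≠ 0 := by intro h; rw [h, h0] at hbig; omega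
        have htm : t₀ ≠ m := by intro h; rw [h, hm] at hbig; omega
        refine Or.inr ⟨t₀, by omega, by omega, ?_⟩
        have hA1 : G.Adj (p (t₀ - 1)) (p t₀) := by
          have h1 := hadj (t₀ - 1) (by omega)
          have e : t₀ - 1 + 1 = t₀ := by omega
          rwa [e] at h1
        have hA2 : G.Adj (p t₀) (p (t₀ + 1)) := hadj t₀ (by omega)
        have l1 : p (t₀ - 1) < p t₀ := by
          rw [Fin.lt_def]
          have h1 := hmax (t₀ - 1) (by omega)
          have h2 : ((p (t₀ - 1) : Fin n) : ℕ) ≠ ((p t₀ : Fin n) : ℕ) :=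
            fun h => hA1.ne (Fin.ext h)
          omega
        have l2 : p (t₀ + 1) < p t₀ := by
          rw [Fin.lt_def]
          have h1 := hmax (t₀ + 1) (by omega)
          have h2 : ((p (t₀ + 1) : Fin n) : ℕ) ≠ ((p t₀ : Fin n) : ℕ) :=
            fun h => hA2.ne (Fin.ext h.symm)
          omega
        by_cases heq : p (t₀ - 1) = p (t₀ + 1)
        · exact Or.inr heq
        · exact Or.inl (closed_apply hG hA1.symm hA2 heq (Or.inr ⟨l1, l2⟩))
      · by_cases hsmall : ∃ t, t ≤ m ∧ ((p t : Fin n) : ℕ) < (a : ℕ)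
        · obtain ⟨t₁, ht₁, hmin⟩ := Finset.exists_min_image (Finset.range (m + 1))
            (fun t => ((p t : Fin n) : ℕ)) ⟨0, by simp⟩
          simp only [Finset.mem_range] at ht₁ hmin
          obtain ⟨ts, hts, htsv⟩ := hsmall
          have hlow : ((p t₁ : Fin n) : ℕ) < (a : ℕ) := lt_of_le_of_lt (hmin ts (by omega)) htsv
          have ht0 : t₁ ≠ 0 := by intro h; rw [h, h0] at hlow; omega
          have htm : t₁ ≠ m := by intro h; rw [h, hm] at hlow; omega
          refine Or.inr ⟨t₁, by omega, by omega, ?_⟩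
          have hA1 : G.Adj (p (t₁ - 1)) (p t₁) := by
            have h1 := hadj (t₁ - 1) (by omega)
            have e : t₁ - 1 + 1 = t₁ := by omega
            rwa [e] at h1
          have hA2 : G.Adj (p t₁) (p (t₁ + 1)) := hadj t₁ (by omega)
          have l1 : p t₁ < p (t₁ - 1) := by
            rw [Fin.lt_def]
            have h1 := hmin (t₁ - 1) (by omega)
            have h2 : ((p (t₁ - 1) : Fin n) : ℕ) ≠ ((p t₁ : Fin n) : ℕ) :=
              fun h => hA1.ne (Fin.ext h)
            omega
          have l2 : p t₁ < p (t₁ + 1) := by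
            rw [Fin.lt_def]
            have h1 := hmin (t₁ + 1) (by omega)
            have h2 : ((p (t₁ + 1) : Fin n) : ℕ) ≠ ((p t₁ : Fin n) : ℕ) :=
              fun h => hA2.ne (Fin.ext h.symm)
            omega
          by_cases heq : p (t₁ - 1) = p (t₁ + 1)
          · exact Or.inr heq
          · exact Or.inl (closed_apply hG hA1.symm hA2 heq (Or.inl ⟨l1, l2⟩))
        · push_neg at hbig hsmall
          left
          have hub : ((p 1 : Fin n) : ℕ) ≤ (b : ℕ) := le_trans (hmax 1 (by omega)) hbig
          have hlb : (a : ℕ) ≤ ((p 1 : Fin n) : ℕ) := hsmall 1 (by omega)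
          have hne : p 1 ≠ a := by rw [← h0]; exact (hadj 0 (by omega)).ne.symm
          have hv : ((p 1 : Fin n) : ℕ) ≠ (a : ℕ) := fun h => hne (Fin.ext h)
          have hp1 : p 1 = b := Fin.ext (by omega)
          have := hadj 0 (by omega)
          rwa [h0, hp1] at this
    rcases key with done | ⟨t, ht1, ht2, hst⟩
    · exact done
    rcases hst with hsc | heq
    · apply IH (m - 1) (by omega) (fun s => if s < t then p s else p (s + 1))
      · intro s hs
        by_cases c1 : s + 1 < t
        · simp only [if_pos (by omega : s < t), if_pos c1]
          exact hadj s (by omega)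
        by_cases c2 : s + 1 = t
        · simp only [if_pos (by omega : s < t), if_neg (by omega : ¬s + 1 < t)]
          have e1 : s = t - 1 := by omega
          rw [e1]
          have e2 : t - 1 + 1 + 1 = t + 1 := by omega
          rw [e2]
          exact hsc
        · simp only [if_neg (by omega : ¬s < t), if_neg (by omega : ¬s + 1 < t)]
          exact hadj (s + 1) (by omega)
      · simp only [if_pos (by omega : 0 < t)]; exact h0
      · simp only [if_neg (by omega : ¬m - 1 < t)]
        have e : m - 1 + 1 = m := by omega
        rw [e]; exact hm
    · by_cases hcase : t + 1 = m
      · apply IH (t - 1) (by omega) p (fun s hs => hadj s (by omega)) h0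
        rw [heq, hcase]; exact hm
      · apply IH (m - 2) (by omega) (fun s => if s < t then p s else p (s + 2))
        · intro s hs
          by_cases c1 : s + 1 < t
          · simp only [if_pos (by omega : s < t), if_pos c1]
            exact hadj s (by omega)
          by_cases c2 : s + 1 = t
          · simp only [if_pos (by omega : s < t), if_neg (by omega : ¬s + 1 < t)]
            have e1 : s = t - 1 := by omega
            rw [e1]
            have e2 : t - 1 + 1 + 2 = t + 2 := by omega
            rw [e2, heq]
            exact hadj (t + 1) (by omega)
          · simp only [if_neg (by omega : ¬s < t), if_neg (by omega : ¬s + 1 < t)]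
            exact hadj (s + 2) (by omega)
        · simp only [if_pos (by omega : 0 < t)]; exact h0
        · simp only [if_neg (by omega : ¬m - 2 < t)]
          have e : m - 2 + 2 = m := by omega
          rw [e]; exact hm

lemma spn_of (hconn : G.Connected) (hG : ClosedLabelingOf G (Equiv.refl (Fin n))) : Spn G := by
  intro i h
  obtain ⟨w⟩ := hconn.preconnected i ⟨(i : ℕ) + 1, h⟩
  exact spnAux hG i ⟨(i : ℕ) + 1, h⟩ rfl w.length w.getVert
    (fun t ht => w.adj_getVert_succ ht) w.getVert_zero w.getVert_length

end CLaux

namespace CLaux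
variable {n : ℕ} {G : SimpleGraph (Fin n)}

lemma ufi_of (hG : ClosedLabelingOf G (Equiv.refl (Fin n))) (hS : Spn G) : UFI G := by
  have main : ∀ d : ℕ, ∀ u v w : Fin n, (w : ℕ) - (u : ℕ) ≤ d → G.Adj u w → u < v → v < w →
      G.Adj u v ∧ G.Adj v w := by
    intro d
    induction d with
    | zero =>
      intro u v w hd _ h1 h2
      rw [Fin.lt_def] at h1 h2; omega
    | succ d IH =>
      intro u v w hd huw h1 h2
      rw [Fin.lt_def] at h1 h2
      have hu1 : (u : ℕ) + 1 < n := lt_of_le_of_lt (by omega) w.isLt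
      set u1 : Fin n := ⟨(u : ℕ) + 1, hu1⟩ with hu1def
      have hadj1 : G.Adj u u1 := hS u hu1
      have hne : u1 ≠ w := by
        intro h
        have := congrArg Fin.val h
        simp [hu1def] at this
        omega
      have hA : G.Adj u1 w :=
        closed_apply hG hadj1 huw hne
          (Or.inl ⟨by rw [Fin.lt_def]; simp [hu1def], by rw [Fin.lt_def]; omega⟩)
      by_cases hv : v = u1
      · subst hv; exact ⟨hadj1, hA⟩
      · have hlt : u1 < v := by
          rw [Fin.lt_def]
          simp only [hu1def]
          have : (v : ℕ) ≠ (u : ℕ) + 1 := fun h => hv (Fin.ext (by simp [hu1def, h]))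
          omega
        have hIH := IH u1 v w (by simp [hu1def]; omega) hA hlt (by rw [Fin.lt_def]; omega)
        refine ⟨?_, hIH.2⟩
        exact closed_apply hG huw.symm hIH.2.symm (fun h => by rw [h] at h1; omega)
          (Or.inr ⟨by rw [Fin.lt_def]; omega, by rw [Fin.lt_def]; omega⟩)
  intro u v w huw h1 h2
  exact main ((w : ℕ) - (u : ℕ)) u v w le_rfl huw h1 h2

lemma cliqueAux (hU : UFI G) {u w x y : Fin n} (huw : G.Adj u w)
    (h1 : u ≤ x) (h2 : x < y) (h3 : y ≤ w) : G.Adj x y := by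
  rcases eq_or_lt_of_le h1 with h1e | h1l
  · rw [← h1e]
    rcases eq_or_lt_of_le h3 with h3e | h3l
    · rw [h3e]; exact huw
    · exact (hU u y w huw (by rw [h1e]; exact h2) h3l).1
  · rcases eq_or_lt_of_le h3 with h3e | h3l
    · rw [h3e]
      exact (hU u x w huw h1l (by rw [← h3e]; exact h2)).2
    · have h4 : G.Adj u y := (hU u y w huw (h1l.trans h2) h3l).1
      exact (hU u x y h4 h1l h2).2

lemma twin_adj {u v : Fin n} (h : Twin G u v) (hne : u ≠ v) : G.Adj u v := by
  have h2 : u ∈ fullNbhd G v := h ▸ self_mem_fullNbhd u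
  rcases mem_fullNbhd.1 h2 with h' | h'
  · exact absurd h' hne
  · exact h'.symm

lemma twin_symm {u v : Fin n} (h : Twin G u v) : Twin G v u := Eq.symm h

lemma twin_trans {u v w : Fin n} (h1 : Twin G u v) (h2 : Twin G v w) : Twin G u w :=
  Eq.trans h1 h2

lemma twin_mem {u v x : Fin n} (h : Twin G u v) (hx : x ∈ fullNbhd G u) :
    x ∈ fullNbhd G v := h ▸ hx

lemma twin_convex (hU : UFI G) {u v w : Fin n} (h1 : u ≤ v) (h2 : v ≤ w)
    (h : Twin G u w) : Twin G u v := by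
  rcases eq_or_lt_of_le h1 with rfl | h1
  · rfl
  rcases eq_or_lt_of_le h2 with rfl | h2
  · exact h
  have huw : G.Adj u w := twin_adj h (by
    intro hh
    rw [hh] at h1
    exact absurd (h1.trans h2) (lt_irrefl _))
  have goal : fullNbhd G u = fullNbhd G v := by
    ext x
    constructor
    · intro hx
      rcases lt_trichotomy x v with hxv | rfl | hxv
      · -- x < v : x ∈ N[u] = N[w], x ≠ w, so Adj x w, then clique x..v..w
        have hxw : x ∈ fullNbhd G w := twin_mem h hx
        have hxnw : x ≠ w := by
          intro hh; rw [hh] at hxv; exact absurd (hxv.trans h2) (lt_irrefl _)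
        rcases mem_fullNbhd.1 hxw with h' | h'
        · exact absurd h' hxnw
        · exact mem_fullNbhd.2 (Or.inr
            (cliqueAux hU h'.symm le_rfl hxv h2.le).symm)
      · exact self_mem_fullNbhd _
      · -- v < x : x ∈ N[u], x ≠ u, Adj u x, clique u..v..x
        have hxnu : x ≠ u := by
          intro hh; rw [hh] at hxv; exact absurd (h1.trans hxv) (lt_irrefl _)
        rcases mem_fullNbhd.1 hx with h' | h'
        · exact absurd h' hxnu
        · exact mem_fullNbhd.2 (Or.inr (cliqueAux hU h' h1.le hxv le_rfl))
    · intro hx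
      rcases mem_fullNbhd.1 hx with rfl | hvx
      · exact mem_fullNbhd.2 (Or.inr (cliqueAux hU huw le_rfl h1 h2.le))
      rcases lt_trichotomy x v with hxv | hxveq | hxv
      · rcases lt_trichotomy x u with hxu | hxueq | hxu
        · -- x < u : umbrella on edge (x,v)
          exact mem_fullNbhd.2 (Or.inr ((hU x u v hvx.symm hxu h1).1.symm))
        · rw [hxueq]; exact self_mem_fullNbhd _
        · exact mem_fullNbhd.2 (Or.inr (cliqueAux hU huw le_rfl hxu (hxv.trans h2).le))
      · rw [hxveq]
        exact mem_fullNbhd.2 (Or.inr (cliqueAux hU huw le_rfl h1 h2.le))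
      · -- v < x
        have hvw : G.Adj v w := cliqueAux hU huw h1.le h2 le_rfl
        rcases lt_trichotomy x w with hxw | rfl | hxw
        · have := (hU v x w hvw hxv hxw).2
          exact twin_mem (twin_symm h) (mem_fullNbhd.2 (Or.inr this.symm))
        · exact twin_mem (twin_symm h) (self_mem_fullNbhd _)
        · have := (hU v w x hvx h2 hxw).2
          exact twin_mem (twin_symm h) (mem_fullNbhd.2 (Or.inr this))
  exact goal

lemma twin_between (hU : UFI G) {x z y : Fin n} (h : Twin G x z)
    (h1 : min x z ≤ y) (h2 : y ≤ max x z) : Twin G x y := by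
  rcases le_total x z with hxz | hzx
  · rw [min_eq_left hxz] at h1; rw [max_eq_right hxz] at h2
    exact twin_convex hU h1 h2 h
  · rw [min_eq_right hzx] at h1; rw [max_eq_left hzx] at h2
    exact twin_trans h (twin_convex hU h1 h2 (twin_symm h))

end CLaux

namespace CLaux
variable {n : ℕ} {G : SimpleGraph (Fin n)}

lemma spn_apply (hS : Spn G) {x y : Fin n} (h : (y : ℕ) = (x : ℕ) + 1) : G.Adj x y := by
  have hlt : (x : ℕ) + 1 < n := by rw [← h]; exact y.isLt
  have h2 := hS x hlt
  have he : (⟨(x : ℕ) + 1, hlt⟩ : Fin n) = y := Fin.ext (by rw [h])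
  rwa [he] at h2

end CLaux

namespace CLaux
variable {n : ℕ} {G : SimpleGraph (Fin n)}

lemma pos_of_ne {z x : Fin n} (hz : (z : ℕ) = 0) (hx : x ≠ z) : z < x := by
  rw [Fin.lt_def]
  have : (x : ℕ) ≠ (z : ℕ) := fun h => hx (Fin.ext h)
  omega

lemma tau_first (hS : Spn G) (hU : UFI G) (τ : Fin n ≃ Fin n) (hτ : UF G τ) (hn : 0 < n) :
    Twin G (τ.symm ⟨0, hn⟩) ⟨0, hn⟩ ∨ Twin G (τ.symm ⟨0, hn⟩) ⟨n - 1, by omega⟩ := by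
  classical
  set z0 : Fin n := ⟨0, hn⟩ with hz0
  set zl : Fin n := ⟨n - 1, by omega⟩ with hzl
  have hz0v : (z0 : ℕ) = 0 := rfl
  have hzlv : (zl : ℕ) = n - 1 := rfl
  set f := τ.symm z0 with hf
  have hτf : τ f = z0 := τ.apply_symm_apply z0
  by_cases hn1 : n = 1
  · left
    have : f = z0 := Fin.ext (by omega)
    rw [this]
    rfl
  have hn2 : 2 ≤ n := by omega
  set N := fullNbhd G f with hN
  have hNfin : N.Finite := Set.toFinite N
  have hns : hNfin.toFinset.Nonempty := ⟨f, by rw [Set.Finite.mem_toFinset]; exact self_mem_fullNbhd f⟩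
  set L := hNfin.toFinset.min' hns with hL
  set R := hNfin.toFinset.max' hns with hR
  have hLmem : L ∈ N := by rw [← Set.Finite.mem_toFinset hNfin]; exact hNfin.toFinset.min'_mem hns
  have hRmem : R ∈ N := by rw [← Set.Finite.mem_toFinset hNfin]; exact hNfin.toFinset.max'_mem hns
  have hLle : ∀ x, x ∈ N → L ≤ x := fun x hx =>
    hNfin.toFinset.min'_le x ((Set.Finite.mem_toFinset hNfin).2 hx)
  have hRge : ∀ x, x ∈ N → x ≤ R := fun x hx =>
    hNfin.toFinset.le_max' x ((Set.Finite.mem_toFinset hNfin).2 hx)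
  have hLf : L ≤ f := hLle f (self_mem_fullNbhd f)
  have hfR : f ≤ R := hRge f (self_mem_fullNbhd f)
  -- N is an interval
  have hint : ∀ y : Fin n, L ≤ y → y ≤ R → y ∈ N := by
    intro y hy1 hy2
    rcases le_total y f with hyf | hfy
    · rcases mem_fullNbhd.1 hLmem with hLf' | hLf'
      · have : y = f := le_antisymm hyf (hLf' ▸ hy1)
        rw [this]; exact self_mem_fullNbhd f
      · rcases eq_or_lt_of_le hy1 with he | hlt
        · rw [← he]; exact hLmem
        · rcases eq_or_lt_of_le hyf with he | hlt2
          · rw [he]; exact self_mem_fullNbhd f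
          · exact mem_fullNbhd.2 (Or.inr (hU L y f hLf'.symm hlt hlt2).2.symm)
    · rcases mem_fullNbhd.1 hRmem with hRf' | hRf'
      · have : y = f := le_antisymm (hRf' ▸ hy2) hfy
        rw [this]; exact self_mem_fullNbhd f
      · rcases eq_or_lt_of_le hy2 with he | hlt
        · rw [he]; exact hRmem
        · rcases eq_or_lt_of_le hfy with he | hlt2
          · rw [← he]; exact self_mem_fullNbhd f
          · exact mem_fullNbhd.2 (Or.inr (hU f y R hRf' hlt2 hlt).1)
  -- directional clique helper
  have hclqd : ∀ x y, x ∈ N → y ∈ N → x ≠ y → τ x < τ y → G.Adj x y := by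
    intro x y hx hy hne hlt
    by_cases hxf : x = f
    · rcases mem_fullNbhd.1 hy with h' | h'
      · exact absurd (h'.trans hxf.symm) hne.symm
      · rw [hxf]; exact h'
    · have hyf : y ≠ f := by
        intro h
        rw [h, hτf] at hlt
        exact absurd hlt (by rw [Fin.lt_def]; omega)
      rcases mem_fullNbhd.1 hy with h' | h'
      · exact absurd h' hyf
      · have h0x : τ f < τ x := by
          rw [hτf]
          exact pos_of_ne rfl (fun h => hxf (by rw [← τ.symm_apply_apply x, h]))
        exact (hτ f x y h' h0x hlt).2
  have hclq : ∀ x y, x ∈ N → y ∈ N → x ≠ y → G.Adj x y := by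
    intro x y hx hy hne
    have hτne : τ x ≠ τ y := fun h => hne (τ.injective h)
    rcases hτne.lt_or_gt with hlt | hlt
    · exact hclqd x y hx hy hne hlt
    · exact (hclqd y x hy hx hne.symm hlt).symm
  by_cases hL0 : (L : ℕ) = 0
  · left
    have hLz : L = z0 := Fin.ext (by simpa using hL0)
    rw [← hLz]
    ext x
    constructor
    · intro hx
      by_cases hxL : x = L
      · rw [hxL]; exact self_mem_fullNbhd L
      · exact mem_fullNbhd.2 (Or.inr (hclq L x hLmem hx (fun h => hxL h.symm)))
    · intro hx
      rcases mem_fullNbhd.1 hx with he | hadj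
      · rw [he]; exact hLmem
      · by_contra hxN
        have hxR : R < x := by
          by_contra hle
          push_neg at hle
          exact hxN (hint x (by rw [Fin.le_def]; omega) hle)
        rcases eq_or_lt_of_le hLf with he | hlt
        · exact hxN (mem_fullNbhd.2 (Or.inr (he ▸ hadj)))
        · exact hxN (mem_fullNbhd.2 (Or.inr (hU L f x hadj hlt (lt_of_le_of_lt hfR hxR)).2))
  by_cases hRl : (R : ℕ) = n - 1
  · right
    have hRz : R = zl := Fin.ext (by simpa using hRl)
    rw [← hRz]
    ext x
    constructor
    · intro hx
      by_cases hxR : x = R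
      · rw [hxR]; exact self_mem_fullNbhd R
      · exact mem_fullNbhd.2 (Or.inr (hclq R x hRmem hx (fun h => hxR h.symm)))
    · intro hx
      rcases mem_fullNbhd.1 hx with he | hadj
      · rw [he]; exact hRmem
      · by_contra hxN
        have hxL : x < L := by
          by_contra hle
          push_neg at hle
          exact hxN (hint x hle (by rw [Fin.le_def]; omega))
        rcases eq_or_lt_of_le hfR with he | hlt
        · exact hxN (mem_fullNbhd.2 (Or.inr (he ▸ hadj)))
        · exact hxN (mem_fullNbhd.2 (Or.inr
            (hU x f R hadj.symm (lt_of_lt_of_le hxL hLf) hlt).1.symm))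
  exfalso
  have hL1 : 1 ≤ (L : ℕ) := by omega
  have hRn : (R : ℕ) < n - 1 := by have := R.isLt; omega
  set FA := Finset.univ.filter (fun x : Fin n => (x : ℕ) < (L : ℕ)) with hFA
  set FC := Finset.univ.filter (fun x : Fin n => (R : ℕ) < (x : ℕ)) with hFC
  have hFAne : FA.Nonempty := ⟨z0, by simp [hFA]; omega⟩
  have hFCne : FC.Nonempty := ⟨zl, by simp [hFC]; omega⟩
  obtain ⟨a, haA, hamin⟩ := Finset.exists_min_image FA (fun x => τ x) hFAne
  obtain ⟨c, hcC, hcmin⟩ := Finset.exists_min_image FC (fun x => τ x) hFCne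
  simp only [hFA, Finset.mem_filter, Finset.mem_univ, true_and] at haA
  simp only [hFC, Finset.mem_filter, Finset.mem_univ, true_and] at hcC
  have hanotN : a ∉ N := by
    intro h
    have := hLle a h
    rw [Fin.le_def] at this
    omega
  have hcnotN : c ∉ N := by
    intro h
    have := hRge c h
    rw [Fin.le_def] at this
    omega
  have haf : a ≠ f := fun h => hanotN (h ▸ self_mem_fullNbhd f)
  have hcf : c ≠ f := fun h => hcnotN (h ▸ self_mem_fullNbhd f)
  have key1 : ∀ q, q ∈ N → τ q < τ a := by
    intro q hq
    by_cases hqf : q = f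
    · rw [hqf, hτf]
      exact pos_of_ne rfl (fun h => haf (by rw [← τ.symm_apply_apply a, h]))
    · by_contra hle
      push_neg at hle
      have hne : τ a ≠ τ q := fun h => hanotN (τ.injective h ▸ hq)
      have hlt : τ a < τ q := lt_of_le_of_ne hle hne
      have h0a : τ f < τ a := by
        rw [hτf]
        exact pos_of_ne rfl (fun h => haf (by rw [← τ.symm_apply_apply a, h]))
      have hfq : G.Adj f q := by
        rcases mem_fullNbhd.1 hq with h' | h'
        · exact absurd h' hqf
        · exact h'
      exact hanotN (mem_fullNbhd.2 (Or.inr (hτ f a q hfq h0a hlt).1))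
  have key2 : ∀ q, q ∈ N → τ q < τ c := by
    intro q hq
    by_cases hqf : q = f
    · rw [hqf, hτf]
      exact pos_of_ne rfl (fun h => hcf (by rw [← τ.symm_apply_apply c, h]))
    · by_contra hle
      push_neg at hle
      have hne : τ c ≠ τ q := fun h => hcnotN (τ.injective h ▸ hq)
      have hlt : τ c < τ q := lt_of_le_of_ne hle hne
      have h0c : τ f < τ c := by
        rw [hτf]
        exact pos_of_ne rfl (fun h => hcf (by rw [← τ.symm_apply_apply c, h]))
      have hfq : G.Adj f q := by
        rcases mem_fullNbhd.1 hq with h' | h'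
        · exact absurd h' hqf
        · exact h'
      exact hcnotN (mem_fullNbhd.2 (Or.inr (hτ f c q hfq h0c hlt).1))
  have hac : τ a ≠ τ c := by
    intro h
    have : a = c := τ.injective h
    rw [this] at haA
    omega
  rcases hac.lt_or_gt with hlt | hlt
  · -- τ a < τ c : use edge (R, R+1)
    have hR1lt : (R : ℕ) + 1 < n := by omega
    set R1 : Fin n := ⟨(R : ℕ) + 1, hR1lt⟩ with hR1
    have hR1v : (R1 : ℕ) = (R : ℕ) + 1 := rfl
    have hRR1 : G.Adj R R1 := hS R hR1lt
    have hcR1 : τ c ≤ τ R1 := hcmin R1 (by simp [hFC]; omega)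
    have h1 : τ R < τ a := key1 R hRmem
    have h2 : τ a < τ R1 := lt_of_lt_of_le hlt hcR1
    have haR1 : G.Adj a R1 := (hτ R a R1 hRR1 h1 h2).2
    have haflt : a < f := by rw [Fin.lt_def]; rw [Fin.le_def] at hLf; omega
    have hfR1 : f < R1 := by rw [Fin.lt_def, hR1v]; rw [Fin.le_def] at hfR; omega
    exact hanotN (mem_fullNbhd.2 (Or.inr (hU a f R1 haR1 haflt hfR1).1.symm))
  · -- τ c < τ a : use edge (L-1, L)
    have hLvlt : (L : ℕ) < n := L.isLt
    have hL1lt : (L : ℕ) - 1 + 1 < n := by omega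
    set L1 : Fin n := ⟨(L : ℕ) - 1, by omega⟩ with hL1d
    have hL1v : (L1 : ℕ) = (L : ℕ) - 1 := rfl
    have hL1L : G.Adj L1 L := by
      have h := hS L1 (by rw [hL1v]; omega)
      have he : (⟨(L1 : ℕ) + 1, by rw [hL1v]; omega⟩ : Fin n) = L := Fin.ext (by simp [hL1v]; omega)
      rwa [he] at h
    have haL1 : τ a ≤ τ L1 := hamin L1 (by simp [hFA]; omega)
    have h1 : τ L < τ c := key2 L hLmem
    have h2 : τ c < τ L1 := lt_of_lt_of_le hlt haL1
    have hLc : G.Adj L c := (hτ L c L1 hL1L.symm h1 h2).1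
    rcases eq_or_lt_of_le hLf with he | hlt2
    · exact hcnotN (mem_fullNbhd.2 (Or.inr (he ▸ hLc)))
    · have hfc : f < c := by rw [Fin.lt_def]; rw [Fin.le_def] at hfR; omega
      exact hcnotN (mem_fullNbhd.2 (Or.inr (hU L f c hLc hlt2 hfc).2))

end CLaux

namespace CLaux

lemma sA_val {m : ℕ} (f : Fin (m + 1)) (i : Fin m) :
    ((f.succAbove i : Fin (m + 1)) : ℕ) =
      if (i : ℕ) < (f : ℕ) then (i : ℕ) else (i : ℕ) + 1 := by
  by_cases h : (i : ℕ) < (f : ℕ)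
  · rw [Fin.succAbove_of_castSucc_lt f i (by rw [Fin.lt_def]; simpa using h)]
    simp [h]
  · rw [Fin.succAbove_of_le_castSucc f i (by rw [Fin.le_def]; simpa using not_lt.1 h)]
    simp [h]

lemma mono_of_first : ∀ N : ℕ, ∀ G : SimpleGraph (Fin N), ∀ τ : Fin N ≃ Fin N,
    Spn G → UFI G → UF G τ → ∀ hn : 0 < N, Twin G (τ.symm ⟨0, hn⟩) ⟨0, hn⟩ →
    ∀ u v : Fin N, u < v → ¬Twin G u v → τ u < τ v := by
  intro N
  induction N using Nat.strong_induction_on with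
  | _ N IH =>
    intro G τ hS hU hτ hn hfirst u v huv hntwin
    by_cases hN1 : N = 1
    · exfalso
      rw [Fin.lt_def] at huv
      have h1 := u.isLt
      have h2 := v.isLt
      omega
    have hN2 : 2 ≤ N := by omega
    obtain ⟨m, rfl⟩ : ∃ m, N = m + 1 := ⟨N - 1, by omega⟩
    have hm1 : 1 ≤ m := by omega
    have hm0 : 0 < m := hm1
    set z0 : Fin (m + 1) := ⟨0, hn⟩ with hz0d
    set z1 : Fin (m + 1) := ⟨1, by omega⟩ with hz1d
    set zl : Fin (m + 1) := ⟨m, by omega⟩ with hzld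
    have hz0v : (z0 : ℕ) = 0 := rfl
    have hz1v : (z1 : ℕ) = 1 := rfl
    have hzlv : (zl : ℕ) = m := rfl
    set f := τ.symm z0 with hfd
    have hτf : τ f = z0 := τ.apply_symm_apply z0
    set K := fullNbhd G f with hKd
    have hfK : f ∈ K := self_mem_fullNbhd f
    have hKz : ∀ w, w ∈ K ↔ w ∈ fullNbhd G z0 :=
      fun w => ⟨fun h => twin_mem hfirst h, fun h => twin_mem (twin_symm hfirst) h⟩
    have hKiff : ∀ x, x ∈ K ↔ f ∈ fullNbhd G x := by
      intro x
      rw [hKd, mem_fullNbhd, mem_fullNbhd]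
      constructor
      · rintro (h | h)
        · exact Or.inl h.symm
        · exact Or.inr h.symm
      · rintro (h | h)
        · exact Or.inl h.symm
        · exact Or.inr h.symm
    have hKdc_id : ∀ x y : Fin (m + 1), y ∈ K → x ≤ y → x ∈ K := by
      intro x y hy hxy
      rw [hKz] at hy ⊢
      rcases mem_fullNbhd.1 hy with he | hadj
      · have hx : x = z0 := le_antisymm (he ▸ hxy) (by rw [Fin.le_def]; omega)
        rw [hx]; exact self_mem_fullNbhd z0
      · rcases eq_or_lt_of_le hxy with he | hlt
        · rw [he]; exact hy
        · by_cases hx0 : x = z0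
          · rw [hx0]; exact self_mem_fullNbhd z0
          · have h0x : z0 < x := pos_of_ne rfl hx0
            exact mem_fullNbhd.2 (Or.inr (hU z0 x y hadj h0x hlt).1)
    have hKτdc : ∀ x y : Fin (m + 1), y ∈ K → τ x ≤ τ y → x ∈ K := by
      intro x y hy hxy
      rcases eq_or_lt_of_le hxy with he | hlt
      · rw [τ.injective he]; exact hy
      · by_cases hxf : x = f
        · rw [hxf]; exact hfK
        · by_cases hyf : y = f
          · exfalso
            rw [hyf, hτf, Fin.lt_def] at hlt
            omega
          · have hfy : G.Adj f y := by
              rcases mem_fullNbhd.1 hy with h | h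
              · exact absurd h hyf
              · exact h
            have h0x : τ f < τ x := by
              rw [hτf]
              exact pos_of_ne rfl (fun h => hxf (by rw [← τ.symm_apply_apply x, h]))
            exact mem_fullNbhd.2 (Or.inr (hτ f x y hfy h0x hlt).1)
    have hz0K : z0 ∈ K := (hKz z0).2 (self_mem_fullNbhd z0)
    have hz1K : z1 ∈ K := by
      rw [hKz]
      exact mem_fullNbhd.2 (Or.inr (spn_apply hS rfl))
    set g := τ.symm z1 with hgd
    have hτg : τ g = z1 := τ.apply_symm_apply z1
    have hgf : g ≠ f := by
      intro h
      have h2 := congrArg τ h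
      rw [hτg, hτf] at h2
      have h3 := congrArg Fin.val h2
      rw [hz1v, hz0v] at h3
      omega
    have hg : g ∈ K := by
      by_cases hfz0 : f = z0
      · refine hKτdc g z1 hz1K ?_
        rw [hτg, Fin.le_def]
        have hne : τ z1 ≠ z0 := by
          intro h
          have h2 : z1 = f := by rw [hfd, ← h, τ.symm_apply_apply]
          have h3 := congrArg Fin.val h2
          rw [hz1v] at h3
          have h4 := congrArg Fin.val hfz0
          rw [hz0v] at h4
          omega
        have h3 : ((τ z1 : Fin (m + 1)) : ℕ) ≠ 0 := fun h => hne (Fin.ext (by rw [h, hz0v]))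
        omega
      · refine hKτdc g z0 hz0K ?_
        rw [hτg, Fin.le_def]
        have hne : τ z0 ≠ z0 := by
          intro h
          have h5 : τ.symm (τ z0) = τ.symm z0 := congrArg τ.symm h
          rw [τ.symm_apply_apply] at h5
          exact hfz0 (by rw [hfd, ← h5])
        have h3 : ((τ z0 : Fin (m + 1)) : ℕ) ≠ 0 := fun h => hne (Fin.ext (by rw [h, hz0v]))
        omega
    -- deletion setup
    set emb := f.succAbove with hembd
    have hembv : ∀ i : Fin m, ((emb i : Fin (m + 1)) : ℕ) =
        if (i : ℕ) < (f : ℕ) then (i : ℕ) else (i : ℕ) + 1 := fun i => sA_val f i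
    have hembne : ∀ i, emb i ≠ f := fun i => Fin.succAbove_ne f i
    have hembmono : StrictMono emb := Fin.strictMono_succAbove f
    set G' := SimpleGraph.comap emb G with hG'd
    have hG'adj : ∀ x y : Fin m, G'.Adj x y ↔ G.Adj (emb x) (emb y) := fun x y => Iff.rfl
    have hz00 : z0 = (0 : Fin (m + 1)) := Fin.ext (by simp [hz0v])
    have hτne0 : ∀ i : Fin m, τ (emb i) ≠ 0 := by
      intro i h
      apply hembne i
      rw [hfd, hz00, ← h, τ.symm_apply_apply]
    set θ : Fin m → Fin m := fun i => (τ (emb i)).pred (hτne0 i) with hθd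
    have hθsucc : ∀ i, (θ i).succ = τ (emb i) := fun i => Fin.succ_pred _ _
    have hθbij : Function.Bijective θ := by
      constructor
      · intro a b hab
        have h2 : (θ a).succ = (θ b).succ := congrArg Fin.succ hab
        rw [hθsucc, hθsucc] at h2
        exact hembmono.injective (τ.injective h2)
      · intro j
        have hxf : τ.symm j.succ ≠ f := by
          intro h
          have h2 := congrArg τ h
          rw [τ.apply_symm_apply, hτf, hz00] at h2
          exact Fin.succ_ne_zero j h2
        obtain ⟨i, hi⟩ := Fin.exists_succAbove_eq hxf
        refine ⟨i, Fin.succ_injective _ ?_⟩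
        rw [hθsucc]
        show τ (emb i) = j.succ
        rw [← hembd] at hi
        rw [hi, τ.apply_symm_apply]
    set τ' : Fin m ≃ Fin m := Equiv.ofBijective θ hθbij with hτ'd
    have hτ'app : ∀ i, τ' i = θ i := fun i => rfl
    have hsucc : ∀ i, (τ' i).succ = τ (emb i) := fun i => hθsucc i
    have hlt' : ∀ i j, (τ' i < τ' j ↔ τ (emb i) < τ (emb j)) := by
      intro i j
      rw [← hsucc i, ← hsucc j]
      exact Iff.symm Fin.succ_lt_succ_iff
    have hU' : UFI G' := by
      intro x y z hadj h1 h2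
      exact hU (emb x) (emb y) (emb z) hadj (hembmono h1) (hembmono h2)
    have hτ2 : UF G' τ' := by
      intro x y z hadj h1 h2
      rw [hlt'] at h1 h2
      exact hτ (emb x) (emb y) (emb z) hadj h1 h2
    have hS' : Spn G' := by
      intro i h
      show G.Adj (emb i) (emb ⟨(i : ℕ) + 1, h⟩)
      by_cases h1 : (i : ℕ) + 1 < (f : ℕ)
      · exact spn_apply hS (by rw [hembv, hembv]; simp only [if_pos (by omega : (i:ℕ) < (f:ℕ)), if_pos h1])
      · by_cases h2 : (f : ℕ) ≤ (i : ℕ)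
        · exact spn_apply hS (by rw [hembv, hembv]; simp only [if_neg (by omega : ¬(i:ℕ) < (f:ℕ)), if_neg (by omega : ¬(i:ℕ)+1 < (f:ℕ))])
        · -- boundary: f = i + 1
          have hfv : (f : ℕ) = (i : ℕ) + 1 := by omega
          have hembi : ((emb i : Fin (m + 1)) : ℕ) = (i : ℕ) := by
            rw [hembv]; simp only [if_pos (by omega : (i:ℕ) < (f:ℕ))]
          have hembi1 : ((emb ⟨(i : ℕ) + 1, h⟩ : Fin (m + 1)) : ℕ) = (i : ℕ) + 2 := by
            rw [hembv]; simp only [if_neg (by simp; omega : ¬((⟨(i:ℕ)+1, h⟩ : Fin m) : ℕ) < (f:ℕ))]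
          have hT : Twin G (emb i) f := by
            have hb : Twin G z0 (emb i) := by
              apply twin_between hU (twin_symm hfirst)
              · exact le_trans (min_le_left _ _) (by rw [Fin.le_def, hz0v]; omega)
              · refine le_trans ?_ (le_max_right _ _)
                rw [Fin.le_def, hembi]
                omega
            exact twin_trans (twin_symm hb) (twin_symm hfirst)
          have hAdjf : G.Adj f (emb ⟨(i : ℕ) + 1, h⟩) := spn_apply hS (by omega)
          have hmem : emb ⟨(i : ℕ) + 1, h⟩ ∈ fullNbhd G (emb i) :=
            twin_mem (twin_symm hT) (mem_fullNbhd.2 (Or.inr hAdjf))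
          rcases mem_fullNbhd.1 hmem with he | hadj
          · exfalso
            have := congrArg Fin.val he
            rw [hembi, hembi1] at this
            omega
          · exact hadj
    -- full neighborhoods under deletion
    have hmemG' : ∀ (x j : Fin m), j ∈ fullNbhd G' x ↔ emb j ∈ fullNbhd G (emb x) := by
      intro x j
      rw [mem_fullNbhd, mem_fullNbhd]
      constructor
      · rintro (h | h)
        · exact Or.inl (by rw [h])
        · exact Or.inr h
      · rintro (h | h)
        · exact Or.inl (hembmono.injective h)
        · exact Or.inr h
    have htwin' : ∀ x y : Fin m, Twin G' x y ↔
        (fullNbhd G (emb x) \ {f} = fullNbhd G (emb y) \ {f}) := by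
      intro x y
      constructor
      · intro h
        ext z
        simp only [Set.mem_diff, Set.mem_singleton_iff]
        constructor
        · rintro ⟨hz1, hz2⟩
          obtain ⟨j, hj⟩ := Fin.exists_succAbove_eq hz2
          have hj' : j ∈ fullNbhd G' x := (hmemG' x j).2 (by rw [← hembd] at hj; rw [hj]; exact hz1)
          have hj2 : j ∈ fullNbhd G' y := h ▸ hj'
          have := (hmemG' y j).1 hj2
          rw [← hembd] at hj
          rw [hj] at this
          exact ⟨this, hz2⟩
        · rintro ⟨hz1, hz2⟩
          obtain ⟨j, hj⟩ := Fin.exists_succAbove_eq hz2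
          have hj' : j ∈ fullNbhd G' y := (hmemG' y j).2 (by rw [← hembd] at hj; rw [hj]; exact hz1)
          have hj2 : j ∈ fullNbhd G' x := h.symm ▸ hj'
          have := (hmemG' x j).1 hj2
          rw [← hembd] at hj
          rw [hj] at this
          exact ⟨this, hz2⟩
      · intro h
        ext j
        rw [hmemG', hmemG']
        constructor
        · intro hj
          have h2 : emb j ∈ fullNbhd G (emb x) \ {f} := ⟨hj, hembne j⟩
          rw [h] at h2
          exact h2.1
        · intro hj
          have h2 : emb j ∈ fullNbhd G (emb y) \ {f} := ⟨hj, hembne j⟩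
          rw [← h] at h2
          exact h2.1
    -- identify τ'.symm 0
    have hτ'symm0 : emb (τ'.symm ⟨0, hm0⟩) = g := by
      have h1 := hsucc (τ'.symm ⟨0, hm0⟩)
      rw [Equiv.apply_symm_apply] at h1
      have h2 : ((⟨0, hm0⟩ : Fin m)).succ = z1 := Fin.ext (by simp [hz1v])
      rw [h2] at h1
      rw [hgd, h1, τ.symm_apply_apply]
    have hfirst' : Twin G' (τ'.symm ⟨0, hm0⟩) ⟨0, hm0⟩ := by
      by_cases hcomp : zl ∈ K
      · have hz0zl : G.Adj z0 zl := by
          have h1 : zl ∈ fullNbhd G z0 := (hKz zl).1 hcomp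
          rcases mem_fullNbhd.1 h1 with he | h
          · exfalso; have h2 := congrArg Fin.val he; rw [hzlv, hz0v] at h2; omega
          · exact h
        have hAll : ∀ x y : Fin (m + 1), x ≠ y → G.Adj x y := by
          intro x y hne
          rcases hne.lt_or_gt with h | h
          · exact cliqueAux hU hz0zl (by rw [Fin.le_def, hz0v]; omega) h
              (by rw [Fin.le_def, hzlv]; have := y.isLt; omega)
          · exact (cliqueAux hU hz0zl (by rw [Fin.le_def, hz0v]; omega) h
              (by rw [Fin.le_def, hzlv]; have := x.isLt; omega)).symm
        have hNall : ∀ w z : Fin (m + 1), z ∈ fullNbhd G w := by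
          intro w z
          by_cases h : z = w
          · rw [h]; exact self_mem_fullNbhd w
          · exact mem_fullNbhd.2 (Or.inr (hAll w z (fun hh => h hh.symm)))
        rw [htwin']
        ext z
        simp only [Set.mem_diff, Set.mem_singleton_iff]
        exact ⟨fun h => ⟨hNall _ _, h.2⟩, fun h => ⟨hNall _ _, h.2⟩⟩
      · rcases tau_first hS' hU' τ' hτ2 hm0 with hdone | hsecond
        · exact hdone
        · have hfzl : f ≠ zl := fun h => hcomp (h ▸ hfK)
          have hfvlt : (f : ℕ) < m := by
            have h1 := f.isLt
            have h2 : (f : ℕ) ≠ m := fun h => hfzl (Fin.ext (by rw [h, hzlv]))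
            omega
          have hembm1 : ∀ hh : m - 1 < m, emb ⟨m - 1, hh⟩ = zl := by
            intro hh
            apply Fin.ext
            have h1 := hembv ⟨m - 1, hh⟩
            have hv : ((⟨m - 1, hh⟩ : Fin m) : ℕ) = m - 1 := rfl
            simp only [hv] at h1
            rw [if_neg (by omega)] at h1
            omega
          have hA := (htwin' _ _).1 hsecond
          rw [hτ'symm0, hembm1 (by omega)] at hA
          have hgzl_ne : g ≠ zl := fun h => hcomp (h ▸ hg)
          have hgmem : g ∈ fullNbhd G zl \ {f} := by
            rw [← hA]; exact ⟨self_mem_fullNbhd g, hgf⟩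
          have hzlg : G.Adj g zl := by
            rcases mem_fullNbhd.1 hgmem.1 with he | h
            · exact absurd he hgzl_ne
            · exact h.symm
          have hNg : ∀ z : Fin (m + 1), z ∈ fullNbhd G g := by
            intro z
            rcases lt_trichotomy z g with h | h | h
            · have hgz0 : g ≠ z0 := by
                intro hh
                rw [hh, Fin.lt_def, hz0v] at h
                omega
              have hadj : G.Adj z0 g := by
                rcases mem_fullNbhd.1 ((hKz g).1 hg) with he | hh
                · exact absurd he hgz0
                · exact hh
              exact mem_fullNbhd.2 (Or.inr
                (cliqueAux hU hadj (by rw [Fin.le_def, hz0v]; omega) h le_rfl).symm)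
            · rw [h]; exact self_mem_fullNbhd g
            · exact mem_fullNbhd.2 (Or.inr (cliqueAux hU hzlg le_rfl h
                (by rw [Fin.le_def, hzlv]; have := z.isLt; omega)))
          by_cases hfz0 : f = z0
          · have hembz : emb ⟨0, hm0⟩ = z1 := by
              apply Fin.ext
              have h1 := hembv ⟨0, hm0⟩
              have hfv0 : (f : ℕ) = 0 := congrArg Fin.val hfz0
              have h00 : ((⟨0, hm0⟩ : Fin m) : ℕ) = 0 := rfl
              simp only [h00] at h1
              rw [if_neg (by omega)] at h1
              omega
            rw [htwin', hτ'symm0, hembz]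
            have hz1f : z1 ≠ f := by
              intro hh
              have h2 := congrArg Fin.val hh
              have h3 := congrArg Fin.val hfz0
              rw [hz1v] at h2
              rw [hz0v] at h3
              omega
            have hz1mem : z1 ∈ fullNbhd G zl \ {f} := by rw [← hA]; exact ⟨hNg z1, hz1f⟩
            rcases mem_fullNbhd.1 hz1mem.1 with he | hadjzl
            · rw [he]; exact hA
            · have hN1 : ∀ z : Fin (m + 1), z ∈ fullNbhd G z1 := by
                intro z
                rcases lt_trichotomy z z1 with h | h | h
                · have hz' : z = z0 := by
                    apply Fin.ext
                    rw [Fin.lt_def, hz1v] at h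
                    rw [hz0v]
                    omega
                  rw [hz']
                  exact mem_fullNbhd.2 (Or.inr
                    ((spn_apply hS (by rw [hz1v, hz0v]) : G.Adj z0 z1).symm))
                · rw [h]; exact self_mem_fullNbhd z1
                · exact mem_fullNbhd.2 (Or.inr (cliqueAux hU hadjzl.symm le_rfl h
                    (by rw [Fin.le_def, hzlv]; have := z.isLt; omega)))
              ext z
              simp only [Set.mem_diff, Set.mem_singleton_iff]
              exact ⟨fun h => ⟨hN1 z, h.2⟩, fun h => ⟨hNg z, h.2⟩⟩
          · exfalso
            have hz0f : z0 ≠ f := fun h => hfz0 h.symm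
            have hz0mem : z0 ∈ fullNbhd G zl \ {f} := by rw [← hA]; exact ⟨hNg z0, hz0f⟩
            rcases mem_fullNbhd.1 hz0mem.1 with he | hadjzl
            · have h2 := congrArg Fin.val he; rw [hz0v, hzlv] at h2; omega
            · exact hcomp ((hKz zl).2 (mem_fullNbhd.2 (Or.inr hadjzl.symm)))
    have hrec := IH m (by omega) G' τ' hS' hU' hτ2 hm0 hfirst'
    -- lifting
    by_cases huf : u = f
    · rw [huf, hτf]
      refine pos_of_ne rfl ?_
      intro h
      have hvf : v = f := by rw [hfd, ← h, τ.symm_apply_apply]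
      rw [huf, hvf] at huv
      exact absurd huv (lt_irrefl _)
    by_cases hvf : v = f
    · exfalso
      apply hntwin
      have h1 : min f z0 ≤ u := le_trans (min_le_right f z0) (by rw [Fin.le_def, hz0v]; omega)
      have h2 : u ≤ max f z0 := le_trans (le_of_lt (hvf ▸ huv)) (le_max_left f z0)
      rw [hvf]
      exact twin_symm (twin_between hU hfirst h1 h2)
    · obtain ⟨u₀, hu₀⟩ := Fin.exists_succAbove_eq huf
      obtain ⟨v₀, hv₀⟩ := Fin.exists_succAbove_eq hvf
      rw [← hembd] at hu₀ hv₀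
      have hlt0 : u₀ < v₀ := by
        have h2 : emb u₀ < emb v₀ := by rw [hu₀, hv₀]; exact huv
        exact (StrictMono.lt_iff_lt hembmono).1 h2
      by_cases htw0 : Twin G' u₀ v₀
      · have hA := (htwin' u₀ v₀).1 htw0
        rw [hu₀, hv₀] at hA
        have hdiff : ¬(f ∈ fullNbhd G u ↔ f ∈ fullNbhd G v) := by
          intro hiff
          apply hntwin
          ext z
          by_cases hzf : z = f
          · rw [hzf]; exact hiff
          · constructor
            · intro h
              have h2 : z ∈ fullNbhd G u \ {f} := ⟨h, hzf⟩
              rw [hA] at h2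
              exact h2.1
            · intro h
              have h2 : z ∈ fullNbhd G v \ {f} := ⟨h, hzf⟩
              rw [← hA] at h2
              exact h2.1
        by_cases hfu : f ∈ fullNbhd G u
        · have hfv : f ∉ fullNbhd G v := fun h => hdiff ⟨fun _ => h, fun _ => hfu⟩
          have huK : u ∈ K := (hKiff u).2 hfu
          have hvK : v ∉ K := fun h => hfv ((hKiff v).1 h)
          by_contra hle
          push_neg at hle
          exact hvK (hKτdc v u huK hle)
        · have hfv : f ∈ fullNbhd G v := by
            by_contra h
            exact hdiff ⟨fun hh => absurd hh hfu, fun hh => absurd hh h⟩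
          have hvK : v ∈ K := (hKiff v).2 hfv
          exact absurd ((hKiff u).1 (hKdc_id u v hvK huv.le)) hfu
      · have h2 := hrec u₀ v₀ hlt0 htw0
        rw [hlt' u₀ v₀, hu₀, hv₀] at h2
        exact h2

end CLaux

namespace CLaux
variable {n : ℕ} {G : SimpleGraph (Fin n)}

def Mono (G : SimpleGraph (Fin n)) (τ : Fin n ≃ Fin n) : Prop :=
  ∀ u v : Fin n, u < v → ¬Twin G u v → τ u < τ v

def Anti (G : SimpleGraph (Fin n)) (τ : Fin n ≃ Fin n) : Prop :=
  ∀ u v : Fin n, u < v → ¬Twin G u v → τ v < τ u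

lemma rev_mem_fullNbhd (x z : Fin n) :
    z ∈ fullNbhd (G.comap (Fin.rev : Fin n → Fin n)) x ↔ z.rev ∈ fullNbhd G x.rev := by
  rw [mem_fullNbhd, mem_fullNbhd]
  constructor
  · rintro (h | h)
    · exact Or.inl (by rw [h])
    · exact Or.inr h
  · rintro (h | h)
    · exact Or.inl (Fin.rev_injective h)
    · exact Or.inr h

lemma twin_rev (x y : Fin n) :
    Twin (G.comap (Fin.rev : Fin n → Fin n)) x y ↔ Twin G x.rev y.rev := by
  constructor
  · intro h
    ext z
    have h2 : z.rev ∈ fullNbhd (G.comap (Fin.rev : Fin n → Fin n)) x ↔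
        z.rev ∈ fullNbhd (G.comap (Fin.rev : Fin n → Fin n)) y := by rw [h]
    rw [rev_mem_fullNbhd, rev_mem_fullNbhd, Fin.rev_rev] at h2
    exact h2
  · intro h
    ext z
    rw [rev_mem_fullNbhd, rev_mem_fullNbhd, h]

lemma spn_rev (hS : Spn G) : Spn (G.comap (Fin.rev : Fin n → Fin n)) := by
  intro i h
  show G.Adj i.rev (Fin.rev ⟨(i : ℕ) + 1, h⟩)
  refine (spn_apply hS ?_).symm
  rw [Fin.val_rev, Fin.val_rev]
  have := i.isLt
  simp only []
  omega

lemma ufi_rev (hU : UFI G) : UFI (G.comap (Fin.rev : Fin n → Fin n)) := by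
  intro u v w hadj h1 h2
  have hadj' : G.Adj w.rev u.rev := hadj.symm
  have h2' : w.rev < v.rev := Fin.rev_lt_rev.2 h2
  have h1' : v.rev < u.rev := Fin.rev_lt_rev.2 h1
  obtain ⟨ha, hb⟩ := hU w.rev v.rev u.rev hadj' h2' h1'
  exact ⟨hb.symm, ha.symm⟩

lemma uf_iff_mono_or_anti (hS : Spn G) (hU : UFI G) (hn : 0 < n) (τ : Fin n ≃ Fin n) :
    UF G τ ↔ (Mono G τ ∨ Anti G τ) := by
  constructor
  · intro hτ
    rcases tau_first hS hU τ hτ hn with h1 | h1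
    · exact Or.inl (mono_of_first n G τ hS hU hτ hn h1)
    · right
      set Gr := G.comap (Fin.rev : Fin n → Fin n) with hGrd
      set τr : Fin n ≃ Fin n := Fin.revPerm.trans τ with hτrd
      have hτrapp : ∀ x, τr x = τ x.rev := fun x => rfl
      have hτr : UF Gr τr := by
        intro u v w hadj hh1 hh2
        rw [hτrapp, hτrapp] at hh1 hh2
        exact hτ u.rev v.rev w.rev hadj hh1 hh2
      have hfr : τr.symm ⟨0, hn⟩ = Fin.rev (τ.symm ⟨0, hn⟩) := rfl
      have h2 : Twin Gr (τr.symm ⟨0, hn⟩) ⟨0, hn⟩ := by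
        rw [twin_rev, hfr, Fin.rev_rev]
        have h3 : (⟨0, hn⟩ : Fin n).rev = ⟨n - 1, by omega⟩ :=
          Fin.ext (by rw [Fin.val_rev])
        rw [h3]
        exact h1
      have hmonor := mono_of_first n Gr τr (spn_rev hS) (ufi_rev hU) hτr hn h2
      intro a b hab hntw
      have hnt2 : ¬Twin Gr b.rev a.rev := by
        intro hh
        rw [twin_rev, Fin.rev_rev, Fin.rev_rev] at hh
        exact hntw (twin_symm hh)
      have h3 := hmonor b.rev a.rev (Fin.rev_lt_rev.2 hab) hnt2
      rw [hτrapp, hτrapp, Fin.rev_rev, Fin.rev_rev] at h3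
      exact h3
  · intro h u v w hadj h1 h2
    have hnuv : u ≠ v := fun hh => absurd (hh ▸ h1) (lt_irrefl _)
    have hnvw : v ≠ w := fun hh => absurd (hh ▸ h2) (lt_irrefl _)
    by_cases htuv : Twin G u v
    · have hvw : G.Adj v w := by
        have hmem : w ∈ fullNbhd G v := twin_mem htuv (mem_fullNbhd.2 (Or.inr hadj))
        rcases mem_fullNbhd.1 hmem with he | hh
        · exact absurd he.symm hnvw
        · exact hh
      exact ⟨twin_adj htuv hnuv, hvw⟩
    by_cases htvw : Twin G v w
    · have huv : G.Adj u v := by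
        have hmem : u ∈ fullNbhd G v := twin_mem (twin_symm htvw) (mem_fullNbhd.2 (Or.inr hadj.symm))
        rcases mem_fullNbhd.1 hmem with he | hh
        · exact absurd he hnuv
        · exact hh.symm
      exact ⟨huv, twin_adj htvw hnvw⟩
    rcases h with hM | hA
    · have huv : u < v := by
        rcases lt_trichotomy u v with hh | hh | hh
        · exact hh
        · exact absurd hh hnuv
        · exact absurd (hM v u hh (fun ht => htuv (twin_symm ht))) (not_lt.2 h1.le)
      have hvw : v < w := by
        rcases lt_trichotomy v w with hh | hh | hh
        · exact hh
        · exact absurd hh hnvw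
        · exact absurd (hM w v hh (fun ht => htvw (twin_symm ht))) (not_lt.2 h2.le)
      exact hU u v w hadj huv hvw
    · have hvu : v < u := by
        rcases lt_trichotomy u v with hh | hh | hh
        · exact absurd (hA u v hh htuv) (not_lt.2 h1.le)
        · exact absurd hh hnuv
        · exact hh
      have hwv : w < v := by
        rcases lt_trichotomy v w with hh | hh | hh
        · exact absurd (hA v w hh htvw) (not_lt.2 h2.le)
        · exact absurd hh hnvw
        · exact hh
      obtain ⟨ha, hb⟩ := hU w v u hadj.symm hwv hvu
      exact ⟨hb.symm, ha.symm⟩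

end CLaux

namespace CLaux
variable {n : ℕ} {G : SimpleGraph (Fin n)}

lemma twin_refl (v : Fin n) : Twin G v v := rfl

lemma mono_iff_pointwise (hU : UFI G) (τ : Fin n ≃ Fin n) :
    Mono G τ ↔ ∀ v, Twin G (τ v) v := by
  classical
  constructor
  · intro hM v
    set s := Finset.univ.filter (fun x => Twin G x v) with hs
    have hsne : s.Nonempty := ⟨v, by simp [hs]; exact twin_refl v⟩
    set a := s.min' hsne with had
    set b := s.max' hsne with hbd
    have ha : Twin G a v := by
      have := s.min'_mem hsne
      simp [hs] at this
      exact this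
    have hb : Twin G b v := by
      have := s.max'_mem hsne
      simp [hs] at this
      exact this
    have hmin : ∀ x, Twin G x v → a ≤ x := fun x hx => s.min'_le x (by simp [hs]; exact hx)
    have hmax : ∀ x, Twin G x v → x ≤ b := fun x hx => s.le_max' x (by simp [hs]; exact hx)
    have hav : a ≤ v := hmin v (twin_refl v)
    have hvb : v ≤ b := hmax v (twin_refl v)
    have h1 : (a : ℕ) ≤ ((τ v : Fin n) : ℕ) := by
      have hcard := Finset.card_le_card_of_injOn τ
        (s := Finset.Iio a) (t := Finset.Iio (τ v)) ?_ ?_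
      · rwa [Fin.card_Iio, Fin.card_Iio] at hcard
      · intro x hx
        rw [Finset.mem_coe, Finset.mem_Iio] at hx ⊢
        have hxv : x < v := lt_of_lt_of_le hx hav
        have hnt : ¬Twin G x v := fun ht => absurd (hmin x ht) (not_le.2 hx)
        exact hM x v hxv hnt
      · exact fun x _ y _ h => τ.injective h
    have h2 : ((τ v : Fin n) : ℕ) ≤ (b : ℕ) := by
      have hcard := Finset.card_le_card_of_injOn τ
        (s := Finset.Ioi b) (t := Finset.Ioi (τ v)) ?_ ?_
      · rw [Fin.card_Ioi, Fin.card_Ioi] at hcard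
        have e1 := b.isLt
        have e2 := (τ v).isLt
        omega
      · intro x hx
        rw [Finset.mem_coe, Finset.mem_Ioi] at hx ⊢
        have hxv : v < x := lt_of_le_of_lt hvb hx
        have hnt : ¬Twin G x v := fun ht => absurd (hmax x ht) (not_le.2 hx)
        exact hM v x hxv (fun ht => hnt (twin_symm ht))
      · exact fun x _ y _ h => τ.injective h
    have hab : Twin G a b := twin_trans ha (twin_symm hb)
    have h3 : Twin G a (τ v) := by
      apply twin_between hU hab
      · exact le_trans (min_le_left a b) (by rw [Fin.le_def]; exact h1)
      · exact le_trans (by rw [Fin.le_def]; exact h2) (le_max_right a b)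
    exact twin_trans (twin_symm h3) ha
  · intro h u v huv hntw
    have hTau : Twin G (τ u) u := h u
    have hTav : Twin G (τ v) v := h v
    by_contra hle
    push_neg at hle
    have hne : τ v ≠ τ u := fun hh => huv.ne' (τ.injective hh)
    have hlt : τ v < τ u := lt_of_le_of_ne hle hne
    have hv_gt : max u (τ u) < v := by
      by_contra hc
      push_neg at hc
      exact hntw (twin_between hU (twin_symm hTau) (le_trans (min_le_left _ _) huv.le) hc)
    have hu_lt : u < min v (τ v) := by
      by_contra hc
      push_neg at hc
      exact hntw (twin_symm (twin_between hU (twin_symm hTav) hc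
        (le_trans huv.le (le_max_left _ _))))
    have h3 : Twin G u (τ v) := by
      apply twin_between hU (twin_symm hTau)
      · exact le_trans (min_le_left u (τ u))
          (le_of_lt (lt_of_lt_of_le hu_lt (min_le_right v (τ v))))
      · exact le_trans (le_of_lt hlt) (le_max_right u (τ u))
    exact hntw (twin_trans h3 hTav)

end CLaux

namespace CLaux

lemma card_perm_fiber {α β : Type*} [Fintype α] [DecidableEq α] [Fintype β] [DecidableEq β]
    (q : α → β) :
    Fintype.card {ℓ : Equiv.Perm α // ∀ v, q (ℓ v) = q v}
      = ∏ b : β, (Fintype.card {x // q x = b}).factorial := by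
  classical
  have E : {ℓ : Equiv.Perm α // ∀ v, q (ℓ v) = q v} ≃ (∀ b : β, Equiv.Perm {x // q x = b}) := by
    refine
      { toFun := fun ℓ b => Equiv.Perm.subtypePerm ℓ.1 (fun x => ?_)
        invFun := fun F =>
          ⟨(Equiv.sigmaFiberEquiv q).symm.trans ((Equiv.sigmaCongrRight F).trans
            (Equiv.sigmaFiberEquiv q)), fun v => ?_⟩
        left_inv := fun ℓ => ?_
        right_inv := fun F => ?_ }
    · rw [ℓ.2 x]
    · exact ((F (q v)) ⟨v, rfl⟩).2
    · apply Subtype.ext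
      apply Equiv.ext
      intro v
      rfl
    · funext b
      apply Equiv.ext
      rintro ⟨x, hx⟩
      apply Subtype.ext
      subst hx
      rfl
  rw [Fintype.card_congr E, Fintype.card_pi]
  exact Finset.prod_congr rfl fun b _ => Fintype.card_perm

lemma natcard_perm_fiber {α β : Type*} [Fintype α] [DecidableEq α] [Fintype β] [DecidableEq β]
    (q : α → β) :
    Nat.card {ℓ : Equiv.Perm α // ∀ v, q (ℓ v) = q v}
      = ∏ b : β, (Nat.card {x // q x = b}).factorial := by
  rw [Nat.card_eq_fintype_card, card_perm_fiber q]
  exact Finset.prod_congr rfl fun b _ => by rw [Nat.card_eq_fintype_card]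

end CLaux

open CLaux in
theorem card_closed_labelings {n : ℕ} (G : SimpleGraph (Fin n))
    (hconn : G.Connected) (hG : ClosedLabelingOf G (Equiv.refl (Fin n)))
    (hr : 1 < (exchClasses G).ncard) :
    {ℓ : Fin n ≃ Fin n | ClosedLabelingOf G ℓ}.ncard =
      2 * ∏ᶠ S ∈ exchClasses G, S.ncard.factorial := by
  classical
  have hn : 0 < n := by
    rcases Nat.eq_zero_or_pos n with h | h
    · exfalso
      subst h
      have he : exchClasses G = ∅ := by
        ext S
        simp only [exchClasses, Set.mem_setOf_eq, Set.mem_empty_iff_false, iff_false]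
        rintro ⟨v, -⟩
        exact v.elim0
      rw [he] at hr
      simp at hr
    · exact h
  have hS : Spn G := spn_of hconn hG
  have hU : UFI G := ufi_of hG hS
  -- closed labelings = umbrella-free labelings
  have hclosed_iff : ∀ ℓ : Fin n ≃ Fin n, ClosedLabelingOf G ℓ ↔ UF G ℓ := by
    intro ℓ
    constructor
    · intro hc
      set H := G.comap (⇑ℓ.symm) with hHd
      have hHc : ClosedLabelingOf H (Equiv.refl (Fin n)) := by
        intro a b c h1 h2 hne h4
        exact hc (ℓ.symm a) (ℓ.symm b) (ℓ.symm c) h1 h2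
          (fun hh => hne (ℓ.symm.injective hh)) (by simpa using h4)
      have hHconn : H.Connected :=
        hconn.map ⟨⇑ℓ, fun {a b} hab => by
          show G.Adj (ℓ.symm (ℓ a)) (ℓ.symm (ℓ b))
          simpa using hab⟩ ℓ.surjective
      have hHS : Spn H := spn_of hHconn hHc
      have hHU : UFI H := ufi_of hHc hHS
      intro u v w hadj h1 h2
      have h3 := hHU (ℓ u) (ℓ v) (ℓ w)
        (by show G.Adj (ℓ.symm (ℓ u)) (ℓ.symm (ℓ w)); simpa) h1 h2
      have h4 : G.Adj (ℓ.symm (ℓ u)) (ℓ.symm (ℓ v)) := h3.1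
      have h5 : G.Adj (ℓ.symm (ℓ v)) (ℓ.symm (ℓ w)) := h3.2
      simp only [Equiv.symm_apply_apply] at h4 h5
      exact ⟨h4, h5⟩
    · intro hτ u v w h1 h2 hne h4
      have hℓne : ℓ u ≠ ℓ w := fun hh => hne (ℓ.injective hh)
      rcases h4 with ⟨ha, hb⟩ | ⟨ha, hb⟩
      · rcases hℓne.lt_or_gt with hlt | hlt
        · exact (hτ v u w h2 ha hlt).2
        · exact (hτ v w u h1 hb hlt).2.symm
      · rcases hℓne.lt_or_gt with hlt | hlt
        · exact (hτ u w v h1.symm hlt hb).1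
        · exact (hτ w u v h2.symm hlt ha).1.symm
  have hsetiff : {ℓ : Fin n ≃ Fin n | ClosedLabelingOf G ℓ}
      = {ℓ : Fin n ≃ Fin n | Mono G ℓ} ∪ {ℓ : Fin n ≃ Fin n | Anti G ℓ} := by
    ext ℓ
    rw [Set.mem_union, Set.mem_setOf_eq, Set.mem_setOf_eq, Set.mem_setOf_eq,
      hclosed_iff ℓ, uf_iff_mono_or_anti hS hU hn ℓ]
  -- a non-twin pair exists
  obtain ⟨v₁, v₂, hv12⟩ : ∃ a b : Fin n, ¬Twin G a b := by
    rw [Set.one_lt_ncard_iff (Set.toFinite _)] at hr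
    obtain ⟨S1, S2, hS1, hS2, hne⟩ := hr
    obtain ⟨a, ha⟩ := hS1
    obtain ⟨b, hb⟩ := hS2
    refine ⟨a, b, fun ht => hne ?_⟩
    rw [ha, hb]
    ext w
    simp only [Set.mem_setOf_eq]
    exact ⟨fun hh => hh.trans ht, fun hh => hh.trans ht.symm⟩
  have hvne : v₁ ≠ v₂ := fun h => hv12 (h ▸ twin_refl v₁)
  have hdisj : Disjoint {ℓ : Fin n ≃ Fin n | Mono G ℓ} {ℓ : Fin n ≃ Fin n | Anti G ℓ} := by
    rw [Set.disjoint_left]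
    intro ℓ hM hA
    rw [Set.mem_setOf_eq] at hM hA
    rcases hvne.lt_or_gt with h | h
    · exact absurd (hA v₁ v₂ h hv12) (not_lt.2 (hM v₁ v₂ h hv12).le)
    · have hv21 : ¬Twin G v₂ v₁ := fun ht => hv12 (twin_symm ht)
      exact absurd (hA v₂ v₁ h hv21) (not_lt.2 (hM v₂ v₁ h hv21).le)
  have hinj : Function.Injective (fun ℓ : Fin n ≃ Fin n => ℓ.trans Fin.revPerm) := by
    intro a b h
    apply Equiv.ext
    intro x
    have h2 : (a.trans Fin.revPerm) x = (b.trans Fin.revPerm) x := congrArg (fun e => e x) h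
    exact Fin.rev_injective h2
  have hanti_eq : {ℓ : Fin n ≃ Fin n | Anti G ℓ}
      = (fun ℓ : Fin n ≃ Fin n => ℓ.trans Fin.revPerm) '' {ℓ : Fin n ≃ Fin n | Mono G ℓ} := by
    ext ℓ
    simp only [Set.mem_image, Set.mem_setOf_eq]
    constructor
    · intro hA
      refine ⟨ℓ.trans Fin.revPerm, fun a b hab hnt => ?_, ?_⟩
      · exact Fin.rev_lt_rev.2 (hA a b hab hnt)
      · apply Equiv.ext
        intro x
        show Fin.rev (Fin.rev (ℓ x)) = ℓ x
        exact Fin.rev_rev (ℓ x)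
    · rintro ⟨ℓ₀, hM, rfl⟩
      intro a b hab hnt
      exact Fin.rev_lt_rev.2 (hM a b hab hnt)
  -- counting Mono
  set cls : Fin n → Set (Fin n) := fun v => {w | fullNbhd G w = fullNbhd G v} with hclsd
  have hmemcls : ∀ x v, x ∈ cls v ↔ Twin G x v := fun x v => Iff.rfl
  have hclseq : ∀ u v, cls u = cls v ↔ Twin G u v := by
    intro u v
    constructor
    · intro h
      have h2 : u ∈ cls v := h ▸ (show u ∈ cls u from twin_refl u)
      exact h2
    · intro h
      ext w
      exact ⟨fun hh => hh.trans h, fun hh => hh.trans h.symm⟩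
  set F := Finset.image cls Finset.univ with hFd
  set Q : Fin n → ↥F := fun v => ⟨cls v, Finset.mem_image_of_mem cls (Finset.mem_univ v)⟩ with hQd
  have hQeq : ∀ u v, Q u = Q v ↔ cls u = cls v :=
    fun u v => ⟨fun h => congrArg Subtype.val h, fun h => Subtype.ext h⟩
  have hMeq : {ℓ : Fin n ≃ Fin n | Mono G ℓ} = {ℓ : Fin n ≃ Fin n | ∀ v, Q (ℓ v) = Q v} := by
    ext ℓ
    rw [Set.mem_setOf_eq, Set.mem_setOf_eq, mono_iff_pointwise hU]
    exact forall_congr' fun v => by rw [hQeq, hclseq]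
  have hcardM : {ℓ : Fin n ≃ Fin n | Mono G ℓ}.ncard
      = ∏ b : ↥F, (Nat.card {x // Q x = b}).factorial := by
    rw [hMeq]
    have h0 : {ℓ : Fin n ≃ Fin n | ∀ v, Q (ℓ v) = Q v}.ncard
        = Nat.card {ℓ : Equiv.Perm (Fin n) // ∀ v, Q (ℓ v) = Q v} := by
      rw [← Nat.card_coe_set_eq]
      exact Nat.card_congr (Equiv.subtypeEquivRight fun x => Iff.rfl)
    rw [h0, natcard_perm_fiber Q]
  have hfib : ∀ b : ↥F, Nat.card {x // Q x = b} = (b : Set (Fin n)).ncard := by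
    rintro ⟨S, hSmem⟩
    obtain ⟨v, -, hv⟩ := Finset.mem_image.1 hSmem
    have h1 : ∀ x, (Q x = (⟨S, hSmem⟩ : ↥F) ↔ x ∈ S) := by
      intro x
      constructor
      · intro h
        have h2 : cls x = S := congrArg Subtype.val h
        rw [← h2]
        exact twin_refl x
      · intro h
        apply Subtype.ext
        show cls x = S
        rw [← hv] at h ⊢
        rw [hclseq x v]
        exact h
    rw [← Nat.card_coe_set_eq]
    exact Nat.card_congr (Equiv.subtypeEquivRight h1)
  have hexch : exchClasses G = (↑F : Set (Set (Fin n))) := by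
    ext S
    simp only [exchClasses, Set.mem_setOf_eq, hFd, Finset.coe_image, Finset.coe_univ,
      Set.image_univ, Set.mem_range]
    constructor
    · rintro ⟨v, hv⟩; exact ⟨v, hv.symm⟩
    · rintro ⟨v, hv⟩; exact ⟨v, hv.symm⟩
  have hprod : ∏ᶠ S ∈ exchClasses G, S.ncard.factorial
      = ∏ b : ↥F, ((b : Set (Fin n)).ncard).factorial := by
    rw [hexch, finprod_mem_coe_finset]
    rw [← Finset.prod_attach F (fun S => S.ncard.factorial)]
    rw [Finset.univ_eq_attach]
  rw [hsetiff, Set.ncard_union_eq hdisj (Set.toFinite _) (Set.toFinite _)]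
  rw [hanti_eq, Set.ncard_image_of_injective _ hinj]
  rw [hcardM, hprod]
  have : ∏ b : ↥F, (Nat.card {x // Q x = b}).factorial
      = ∏ b : ↥F, ((b : Set (Fin n)).ncard).factorial :=
    Finset.prod_congr rfl fun b _ => by rw [hfib b]
  rw [this]
  ring
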